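/- Let T be a tree with proper 2-coloring V = A ⊔ B, |A| = k+1 ≤ |B|, such that B contains a vertex of degree at least 3 exactly one of whose neighbors is not a leaf. Then the complete bipartite graph K_{k,m} (for every m) is T-free, and moreover adding any edge within either partite set of K_{k,m} (for m sufficiently large relative to T) creates a copy of T. -/

import Mathlib

open Finset SimpleGraph

/-- `H` contains a copy of `T` as a subgraph. -/
def ContainsCopy {α β : Type*} (H : SimpleGraph α) (T : SimpleGraph β) : Prop :=
  ∃ f : β → α, Function.Injective f ∧ ∀ u v, T.Adj u v → H.Adj (f u) (f v)

/-- Let T be a tree with proper 2-coloring A ⊔ B, |A| = k+1 ≤ |B|, such that B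
contains a vertex of degree ≥ 3 exactly one of whose neighbors is not a leaf.
Then K_{k,m} is T-free for every m, and for m large enough, adding any edge
within either partite set of K_{k,m} creates a copy of T. -/
theorem stmt_17 {VT : Type*} [Fintype VT] [DecidableEq VT] (T : SimpleGraph VT)
    [DecidableRel T.Adj] (hT : T.IsTree)
    (A B : Finset VT) (hdisj : Disjoint A B) (hcover : A ∪ B = Finset.univ)
    (hproper : ∀ u v, T.Adj u v → (u ∈ A ∧ v ∈ B) ∨ (u ∈ B ∧ v ∈ A))
    (k : ℕ) (hA : A.card = k + 1) (hAB : A.card ≤ B.card)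
    (b : VT) (hb : b ∈ B) (hdeg : 3 ≤ T.degree b)
    (hone : ((T.neighborFinset b).filter (fun u => T.degree u ≠ 1)).card = 1) :
    (∀ m : ℕ, ¬ ContainsCopy (completeBipartiteGraph (Fin k) (Fin m)) T) ∧
    (∃ M : ℕ, ∀ m : ℕ, M ≤ m → ∀ x y : Fin k ⊕ Fin m, x ≠ y →
      ((x.isLeft = true ∧ y.isLeft = true) ∨ (x.isRight = true ∧ y.isRight = true)) →
      ContainsCopy
        (completeBipartiteGraph (Fin k) (Fin m) ⊔ SimpleGraph.fromEdgeSet {Sym2.mk x y})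
        T) := by
  unfold ContainsCopy
  constructor
  · have hAnB : ∀ v ∈ A, v ∉ B := fun v hv => Finset.disjoint_left.mp hdisj hv
    have hmem : ∀ v : VT, v ∈ A ∨ v ∈ B := by
      intro v
      have : v ∈ A ∪ B := by rw [hcover]; exact mem_univ v
      exact Finset.mem_union.mp this
    have hflip : ∀ u v, T.Adj u v → (u ∈ A ↔ v ∉ A) := by
      intro u v h
      have h1 := hAnB u
      have h2 := hAnB v
      rcases hproper u v h with ⟨ha, hb⟩ | ⟨ha, hb⟩ <;> tauto
    intro m ⟨f, finj, fhom⟩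
    have key : ∀ u v, T.Walk u v → ((f u).isLeft = (f v).isLeft ↔ (u ∈ A ↔ v ∈ A)) := by
      intro u v p
      induction p with
      | nil => simp
      | @cons u w v h p ih =>
        have h1 := hflip _ _ h
        have h2 : (f u).isLeft ≠ (f w).isLeft := by
          have hadj := fhom _ _ h
          rcases hfu : f u with z | z <;> rcases hfw : f w with z' | z' <;>
            rw [hfu, hfw] at hadj <;> simp_all
        cases hbu : (f u).isLeft <;> cases hbw : (f w).isLeft <;> cases hbv : (f v).isLeft <;>
          rw [hbw, hbv] at ih <;> rw [hbu, hbw] at h2 <;> simp at ih h2 ⊢ <;> tauto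
    obtain ⟨a₀, ha₀⟩ : A.Nonempty := by rw [← Finset.card_pos, hA]; omega
    have conn := hT.isConnected
    have sameA : ∀ a ∈ A, (f a).isLeft = (f a₀).isLeft := by
      intro a ha
      obtain ⟨p⟩ := conn a a₀
      exact (key _ _ p).mpr (by simp [ha, ha₀])
    have oppB : ∀ v ∈ B, (f v).isLeft = !(f a₀).isLeft := by
      intro v hv
      have hvA : v ∉ A := fun h => hAnB v h hv
      obtain ⟨p⟩ := conn v a₀
      cases p with
      | nil => exact absurd ha₀ hvA
      | @cons _ w _ h p =>
        have h1 : w ∈ A := by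
          rcases hproper _ _ h with ⟨h1, _⟩ | ⟨_, h2⟩
          · exact absurd h1 hvA
          · exact h2
        have h2 : (f v).isLeft ≠ (f w).isLeft := by
          have hadj := fhom _ _ h
          rcases hfu : f v with z | z <;> rcases hfw : f w with z' | z' <;>
            rw [hfu, hfw] at hadj <;> simp_all
        have h3 := sameA w h1
        cases hbv : (f v).isLeft <;> cases hbw : (f w).isLeft <;>
          rw [hbv, hbw] at h2 <;> rw [hbw] at h3 <;> rw [← h3] <;> simp at h2 ⊢
    have cardle : ∀ (s : Finset VT), (∀ v ∈ s, (f v).isLeft = true) → s.card ≤ k := by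
      intro s hs
      have hsub : s.image f ⊆ (univ : Finset (Fin k)).image (Sum.inl : Fin k → Fin k ⊕ Fin m) := by
        intro z hz
        obtain ⟨a, ha, rfl⟩ := Finset.mem_image.mp hz
        rcases hfa : f a with w | w
        · exact Finset.mem_image.mpr ⟨w, mem_univ w, rfl⟩
        · have := hs a ha; rw [hfa] at this; simp at this
      have h1 : (s.image f).card = s.card := Finset.card_image_of_injective s finj
      have h2 : ((univ : Finset (Fin k)).image (Sum.inl : Fin k → Fin k ⊕ Fin m)).card = k := by
        rw [Finset.card_image_of_injective _ Sum.inl_injective]; simp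
      have := Finset.card_le_card hsub
      omega
    cases hL : (f a₀).isLeft with
    | true =>
      have := cardle A (fun v hv => by rw [sameA v hv, hL])
      omega
    | false =>
      have := cardle B (fun v hv => by rw [oppB v hv, hL]; rfl)
      omega

  · classical
    have hAnB : ∀ v ∈ A, v ∉ B := fun v hv => Finset.disjoint_left.mp hdisj hv
    have hmem : ∀ v : VT, v ∈ A ∨ v ∈ B := by
      intro v
      have : v ∈ A ∪ B := by rw [hcover]; exact mem_univ v
      exact Finset.mem_union.mp this
    have hbA : b ∉ A := fun h => hAnB b h hb
    set S1 : Finset VT := (T.neighborFinset b).filter (fun u => T.degree u = 1) with hS1def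
    have hsplit := Finset.card_filter_add_card_filter_not
      (s := T.neighborFinset b) (p := fun u => T.degree u = 1)
    have hdegb : (T.neighborFinset b).card = T.degree b := T.card_neighborFinset_eq_degree b
    have hfilterne : ((T.neighborFinset b).filter (fun u => ¬ T.degree u = 1)).card = 1 := by
      convert hone using 2
    have hS1card : 2 ≤ S1.card := by
      rw [hS1def]; omega
    obtain ⟨u0, hu0⟩ := Finset.card_eq_one.mp hone
    have hu0nb : u0 ∈ T.neighborFinset b := by
      have : u0 ∈ (T.neighborFinset b).filter (fun u => T.degree u ≠ 1) := by
        rw [hu0]; exact Finset.mem_singleton_self u0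
      exact (Finset.mem_filter.mp this).1
    have hu0adj : T.Adj b u0 := (T.mem_neighborFinset b u0).mp hu0nb
    have hadjA : ∀ w, T.Adj b w → w ∈ A := by
      intro w hw
      rcases hproper b w hw with ⟨h1, _⟩ | ⟨_, h2⟩
      · exact absurd h1 hbA
      · exact h2
    have hu0A : u0 ∈ A := hadjA u0 hu0adj
    have hS1A : ∀ v ∈ S1, v ∈ A := by
      intro v hv
      exact hadjA v ((T.mem_neighborFinset b v).mp (Finset.mem_filter.mp hv).1)
    have hu0S1 : u0 ∉ S1 := by
      intro h
      have h1 := (Finset.mem_filter.mp h).2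
      have h2 : u0 ∈ (T.neighborFinset b).filter (fun u => T.degree u ≠ 1) := by
        rw [hu0]; exact Finset.mem_singleton_self u0
      exact (Finset.mem_filter.mp h2).2 h1
    have leafonly : ∀ v ∈ S1, ∀ w, T.Adj v w → w = b := by
      intro v hv w hw
      have hd : T.degree v = 1 := (Finset.mem_filter.mp hv).2
      have hbv : b ∈ T.neighborFinset v := by
        rw [T.mem_neighborFinset]
        exact ((T.mem_neighborFinset b v).mp (Finset.mem_filter.mp hv).1).symm
      have hwv : w ∈ T.neighborFinset v := (T.mem_neighborFinset v w).mpr hw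
      have : (T.neighborFinset v).card ≤ 1 := by
        rw [T.card_neighborFinset_eq_degree v, hd]
      exact Finset.card_le_one.mp this w hwv b hbv
    have hnbrS1 : ∀ w, T.Adj b w → w ≠ u0 → w ∈ S1 := by
      intro w hw hne
      have hwnb : w ∈ T.neighborFinset b := (T.mem_neighborFinset b w).mpr hw
      by_cases hd : T.degree w = 1
      · exact Finset.mem_filter.mpr ⟨hwnb, hd⟩
      · have : w ∈ (T.neighborFinset b).filter (fun u => T.degree u ≠ 1) :=
          Finset.mem_filter.mpr ⟨hwnb, hd⟩
        rw [hu0] at this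
        exact absurd (Finset.mem_singleton.mp this) hne
    refine ⟨Fintype.card VT + 2, fun m hm x y hxy hside => ?_⟩
    have hmN : Fintype.card VT + 2 ≤ m := hm
    rcases hside with ⟨hxL, hyL⟩ | ⟨hxR, hyR⟩
    · -- edge inside the left part L
      obtain ⟨x₀, rfl⟩ := Sum.isLeft_iff.mp hxL
      obtain ⟨y₀, rfl⟩ := Sum.isLeft_iff.mp hyL
      have hx₀y₀ : x₀ ≠ y₀ := fun h => hxy (by rw [h])
      have hu0b : u0 ≠ b := fun h => hbA (h ▸ hu0A)
      set C : Finset VT := S1 ∪ B.erase b with hCdef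
      set A'' : Finset VT := (A.erase u0) \ S1 with hA''def
      set tL : Finset (Fin k) := Finset.univ \ {x₀, y₀} with htLdef
      have hCm : C.card ≤ m := le_trans (Finset.card_le_univ C) (by omega)
      have hA''tL : A''.card ≤ tL.card := by
        have h1 : S1 ⊆ A.erase u0 := fun v hv =>
          Finset.mem_erase.mpr ⟨fun h => hu0S1 (h ▸ hv), hS1A v hv⟩
        have h2 : A''.card = (A.erase u0).card - S1.card := Finset.card_sdiff_of_subset h1
        have h3 : (A.erase u0).card = k := by
          rw [Finset.card_erase_of_mem hu0A, hA]; rfl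
        have h4 : tL.card = k - 2 := by
          rw [htLdef, Finset.card_sdiff_of_subset (Finset.subset_univ _), Finset.card_univ,
            Fintype.card_fin, Finset.card_insert_of_notMem (by simp [hx₀y₀]),
            Finset.card_singleton]
        have h5 : 2 ≤ k := by
          have := Fintype.one_lt_card_iff_nontrivial.mpr ⟨⟨x₀, y₀, hx₀y₀⟩⟩
          simp at this; omega
        omega
      have hmemA'' : ∀ v, v ≠ b → v ≠ u0 → v ∉ C → v ∈ A'' := by
        intro v h1 h2 hv
        have hvA : v ∈ A := (hmem v).resolve_right
          (fun hB => hv (Finset.mem_union.mpr (Or.inr (Finset.mem_erase.mpr ⟨h1, hB⟩))))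
        exact Finset.mem_sdiff.mpr ⟨Finset.mem_erase.mpr ⟨h2, hvA⟩,
          fun hS => hv (Finset.mem_union.mpr (Or.inl hS))⟩
      set fL : VT → Fin k ⊕ Fin m := fun v =>
        if h1 : v = b then Sum.inl x₀
        else if h2 : v = u0 then Sum.inl y₀
        else if hv : v ∈ C then Sum.inr (Fin.castLE hCm (C.equivFin ⟨v, hv⟩))
        else Sum.inl (tL.orderEmbOfCardLe hA''tL (A''.equivFin ⟨v, hmemA'' v h1 h2 hv⟩))
        with hfLdef
      have valb : fL b = Sum.inl x₀ := by simp [hfLdef]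
      have valu0 : fL u0 = Sum.inl y₀ := by simp [hfLdef, hu0b]
      have valC : ∀ v (h1 : v ≠ b) (h2 : v ≠ u0) (hv : v ∈ C),
          fL v = Sum.inr (Fin.castLE hCm (C.equivFin ⟨v, hv⟩)) := by
        intro v h1 h2 hv; simp [hfLdef, h1, h2, hv]
      have valA : ∀ v (h1 : v ≠ b) (h2 : v ≠ u0) (hv : v ∉ C),
          fL v = Sum.inl (tL.orderEmbOfCardLe hA''tL (A''.equivFin ⟨v, hmemA'' v h1 h2 hv⟩)) := by
        intro v h1 h2 hv; simp [hfLdef, h1, h2, hv]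
      have tLne : ∀ i, (tL.orderEmbOfCardLe hA''tL i) ≠ x₀ ∧ (tL.orderEmbOfCardLe hA''tL i) ≠ y₀ := by
        intro i
        have h := Finset.orderEmbOfCardLe_mem tL hA''tL i
        have this := (Finset.mem_sdiff.mp h).2
        simp only [Finset.mem_insert, Finset.mem_singleton] at this
        exact ⟨fun hc => this (Or.inl hc), fun hc => this (Or.inr hc)⟩
      refine ⟨fL, ?_, ?_⟩
      · -- injectivity
        intro u v h
        by_cases h1u : u = b <;> by_cases h1v : v = b
        · rw [h1u, h1v]
        all_goals (try subst h1u) <;> (try subst h1v)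
        · by_cases h2v : v = u0
          · subst h2v; rw [valb, valu0] at h; exact absurd (Sum.inl.inj h) hx₀y₀
          · by_cases h3v : v ∈ C
            · rw [valb, valC v h1v h2v h3v] at h; exact absurd h (by simp)
            · rw [valb, valA v h1v h2v h3v] at h
              exact absurd (Sum.inl.inj h).symm (tLne _).1
        · by_cases h2u : u = u0
          · subst h2u; rw [valb, valu0] at h; exact absurd (Sum.inl.inj h).symm hx₀y₀
          · by_cases h3u : u ∈ C
            · rw [valb, valC u h1u h2u h3u] at h; exact absurd h (by simp)
            · rw [valb, valA u h1u h2u h3u] at h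
              exact absurd (Sum.inl.inj h) (tLne _).1
        · by_cases h2u : u = u0 <;> by_cases h2v : v = u0
          · rw [h2u, h2v]
          · subst h2u
            by_cases h3v : v ∈ C
            · rw [valu0, valC v h1v h2v h3v] at h; exact absurd h (by simp)
            · rw [valu0, valA v h1v h2v h3v] at h
              exact absurd (Sum.inl.inj h).symm (tLne _).2
          · subst h2v
            by_cases h3u : u ∈ C
            · rw [valu0, valC u h1u h2u h3u] at h; exact absurd h (by simp)
            · rw [valu0, valA u h1u h2u h3u] at h
              exact absurd (Sum.inl.inj h) (tLne _).2
          · by_cases h3u : u ∈ C <;> by_cases h3v : v ∈ C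
            · rw [valC u h1u h2u h3u, valC v h1v h2v h3v] at h
              have := C.equivFin.injective (Fin.castLE_injective hCm (Sum.inr.inj h))
              exact Subtype.mk.inj this
            · rw [valC u h1u h2u h3u, valA v h1v h2v h3v] at h; exact absurd h (by simp)
            · rw [valA u h1u h2u h3u, valC v h1v h2v h3v] at h; exact absurd h (by simp)
            · rw [valA u h1u h2u h3u, valA v h1v h2v h3v] at h
              have := A''.equivFin.injective ((tL.orderEmbOfCardLe hA''tL).injective (Sum.inl.inj h))
              exact Subtype.mk.inj this
      · -- homomorphism
        have adjLR : ∀ (z : Fin k) (w : Fin m),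
            (completeBipartiteGraph (Fin k) (Fin m) ⊔
              SimpleGraph.fromEdgeSet {Sym2.mk (Sum.inl x₀) (Sum.inl y₀)}).Adj (Sum.inl z) (Sum.inr w) :=
          fun z w => Or.inl (by simp)
        have adjE : (completeBipartiteGraph (Fin k) (Fin m) ⊔
            SimpleGraph.fromEdgeSet {Sym2.mk (Sum.inl x₀) (Sum.inl y₀)}).Adj (Sum.inl x₀) (Sum.inl y₀) :=
          Or.inr (by simp [hx₀y₀])
        have main : ∀ u v, T.Adj u v → u ∈ A → v ∈ B →
            (completeBipartiteGraph (Fin k) (Fin m) ⊔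
              SimpleGraph.fromEdgeSet {Sym2.mk (Sum.inl x₀) (Sum.inl y₀)}).Adj (fL u) (fL v) := by
          intro u v huv huA hvB
          have hub : u ≠ b := fun h => hbA (h ▸ huA)
          by_cases hvb : v = b
          · subst hvb
            by_cases huu0 : u = u0
            · subst huu0; rw [valu0, valb]; exact adjE.symm
            · have huS1 : u ∈ S1 := hnbrS1 u huv.symm huu0
              have huC : u ∈ C := Finset.mem_union.mpr (Or.inl huS1)
              rw [valb, valC u hub huu0 huC]
              exact (adjLR _ _).symm
          · have hvu0 : v ≠ u0 := fun h => hAnB u0 hu0A (h ▸ hvB)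
            have hvC : v ∈ C := Finset.mem_union.mpr (Or.inr (Finset.mem_erase.mpr ⟨hvb, hvB⟩))
            rw [valC v hvb hvu0 hvC]
            have huS1 : u ∉ S1 := fun h => hvb (leafonly u h v huv)
            have huC : u ∉ C := fun h => (Finset.mem_union.mp h).elim huS1
              (fun h' => hAnB u huA (Finset.mem_erase.mp h').2)
            by_cases huu0 : u = u0
            · subst huu0; rw [valu0]; exact adjLR _ _
            · rw [valA u hub huu0 huC]; exact adjLR _ _
        intro u v huv
        rcases hproper u v huv with ⟨h1, h2⟩ | ⟨h1, h2⟩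
        · exact main u v huv h1 h2
        · exact (main v u huv.symm h2 h1).symm
    · -- edge inside the right part R
      obtain ⟨x₀, rfl⟩ := Sum.isRight_iff.mp hxR
      obtain ⟨y₀, rfl⟩ := Sum.isRight_iff.mp hyR
      have hx₀y₀ : x₀ ≠ y₀ := fun h => hxy (by rw [h])
      obtain ⟨l, hl⟩ : S1.Nonempty := Finset.card_pos.mp (by omega)
      have hlA : l ∈ A := hS1A l hl
      have hlb : l ≠ b := fun h => hbA (h ▸ hlA)
      set A' : Finset VT := A.erase l with hA'def
      set B' : Finset VT := B.erase b with hB'def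
      set tR : Finset (Fin m) := Finset.univ \ {x₀, y₀} with htRdef
      have hk : A'.card ≤ k := by
        rw [hA'def, Finset.card_erase_of_mem hlA, hA]
        omega
      have hB'tR : B'.card ≤ tR.card := by
        have h1 : B'.card = B.card - 1 := Finset.card_erase_of_mem hb
        have h2 : B.card ≤ Fintype.card VT := Finset.card_le_univ B
        have h4 : tR.card = m - 2 := by
          rw [htRdef, Finset.card_sdiff_of_subset (Finset.subset_univ _), Finset.card_univ,
            Fintype.card_fin, Finset.card_insert_of_notMem (by simp [hx₀y₀]),
            Finset.card_singleton]
        omega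
      have hmemB' : ∀ v, v ≠ b → v ≠ l → v ∉ A' → v ∈ B' := by
        intro v h1 h2 hv
        have hvB : v ∈ B := (hmem v).resolve_left
          (fun hA2 => hv (Finset.mem_erase.mpr ⟨h2, hA2⟩))
        exact Finset.mem_erase.mpr ⟨h1, hvB⟩
      set fR : VT → Fin k ⊕ Fin m := fun v =>
        if h1 : v = b then Sum.inr x₀
        else if h2 : v = l then Sum.inr y₀
        else if hv : v ∈ A' then Sum.inl (Fin.castLE hk (A'.equivFin ⟨v, hv⟩))
        else Sum.inr (tR.orderEmbOfCardLe hB'tR (B'.equivFin ⟨v, hmemB' v h1 h2 hv⟩))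
        with hfRdef
      have valb : fR b = Sum.inr x₀ := by simp [hfRdef]
      have vall : fR l = Sum.inr y₀ := by simp [hfRdef, hlb]
      have valA' : ∀ v (h1 : v ≠ b) (h2 : v ≠ l) (hv : v ∈ A'),
          fR v = Sum.inl (Fin.castLE hk (A'.equivFin ⟨v, hv⟩)) := by
        intro v h1 h2 hv; simp [hfRdef, h1, h2, hv]
      have valB' : ∀ v (h1 : v ≠ b) (h2 : v ≠ l) (hv : v ∉ A'),
          fR v = Sum.inr (tR.orderEmbOfCardLe hB'tR (B'.equivFin ⟨v, hmemB' v h1 h2 hv⟩)) := by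
        intro v h1 h2 hv; simp [hfRdef, h1, h2, hv]
      have tRne : ∀ i, (tR.orderEmbOfCardLe hB'tR i) ≠ x₀ ∧ (tR.orderEmbOfCardLe hB'tR i) ≠ y₀ := by
        intro i
        have h := Finset.orderEmbOfCardLe_mem tR hB'tR i
        have h2 := (Finset.mem_sdiff.mp h).2
        simp only [Finset.mem_insert, Finset.mem_singleton] at h2
        exact ⟨fun hc => h2 (Or.inl hc), fun hc => h2 (Or.inr hc)⟩
      refine ⟨fR, ?_, ?_⟩
      · -- injectivity
        intro u v h
        by_cases h1u : u = b <;> by_cases h1v : v = b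
        · rw [h1u, h1v]
        all_goals (try subst h1u) <;> (try subst h1v)
        · by_cases h2v : v = l
          · subst h2v; rw [valb, vall] at h; exact absurd (Sum.inr.inj h) hx₀y₀
          · by_cases h3v : v ∈ A'
            · rw [valb, valA' v h1v h2v h3v] at h; exact absurd h (by simp)
            · rw [valb, valB' v h1v h2v h3v] at h
              exact absurd (Sum.inr.inj h).symm (tRne _).1
        · by_cases h2u : u = l
          · subst h2u; rw [valb, vall] at h; exact absurd (Sum.inr.inj h).symm hx₀y₀
          · by_cases h3u : u ∈ A'
            · rw [valb, valA' u h1u h2u h3u] at h; exact absurd h (by simp)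
            · rw [valb, valB' u h1u h2u h3u] at h
              exact absurd (Sum.inr.inj h) (tRne _).1
        · by_cases h2u : u = l <;> by_cases h2v : v = l
          · rw [h2u, h2v]
          · subst h2u
            by_cases h3v : v ∈ A'
            · rw [vall, valA' v h1v h2v h3v] at h; exact absurd h (by simp)
            · rw [vall, valB' v h1v h2v h3v] at h
              exact absurd (Sum.inr.inj h).symm (tRne _).2
          · subst h2v
            by_cases h3u : u ∈ A'
            · rw [vall, valA' u h1u h2u h3u] at h; exact absurd h (by simp)
            · rw [vall, valB' u h1u h2u h3u] at h
              exact absurd (Sum.inr.inj h) (tRne _).2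
          · by_cases h3u : u ∈ A' <;> by_cases h3v : v ∈ A'
            · rw [valA' u h1u h2u h3u, valA' v h1v h2v h3v] at h
              have := A'.equivFin.injective (Fin.castLE_injective hk (Sum.inl.inj h))
              exact Subtype.mk.inj this
            · rw [valA' u h1u h2u h3u, valB' v h1v h2v h3v] at h; exact absurd h (by simp)
            · rw [valB' u h1u h2u h3u, valA' v h1v h2v h3v] at h; exact absurd h (by simp)
            · rw [valB' u h1u h2u h3u, valB' v h1v h2v h3v] at h
              have := B'.equivFin.injective ((tR.orderEmbOfCardLe hB'tR).injective (Sum.inr.inj h))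
              exact Subtype.mk.inj this
      · -- homomorphism
        have adjLR : ∀ (z : Fin k) (w : Fin m),
            (completeBipartiteGraph (Fin k) (Fin m) ⊔
              SimpleGraph.fromEdgeSet {Sym2.mk (Sum.inr x₀) (Sum.inr y₀)}).Adj (Sum.inl z) (Sum.inr w) :=
          fun z w => Or.inl (by simp)
        have adjE : (completeBipartiteGraph (Fin k) (Fin m) ⊔
            SimpleGraph.fromEdgeSet {Sym2.mk (Sum.inr x₀) (Sum.inr y₀)}).Adj (Sum.inr x₀) (Sum.inr y₀) :=
          Or.inr (by simp [hx₀y₀])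
        have main : ∀ u v, T.Adj u v → u ∈ A → v ∈ B →
            (completeBipartiteGraph (Fin k) (Fin m) ⊔
              SimpleGraph.fromEdgeSet {Sym2.mk (Sum.inr x₀) (Sum.inr y₀)}).Adj (fR u) (fR v) := by
          intro u v huv huA hvB
          have hub : u ≠ b := fun h => hbA (h ▸ huA)
          have hvl : v ≠ l := fun h => hAnB l hlA (h ▸ hvB)
          by_cases hul : u = l
          · subst hul
            have hvb : v = b := leafonly _ hl v huv
            subst hvb
            rw [vall, valb]
            exact adjE.symm
          · have huA' : u ∈ A' := Finset.mem_erase.mpr ⟨hul, huA⟩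
            rw [valA' u hub hul huA']
            by_cases hvb : v = b
            · subst hvb; rw [valb]; exact adjLR _ _
            · have hvA' : v ∉ A' := fun h => hAnB v (Finset.mem_erase.mp h).2 hvB
              rw [valB' v hvb hvl hvA']
              exact adjLR _ _
        intro u v huv
        rcases hproper u v huv with ⟨h1, h2⟩ | ⟨h1, h2⟩
        · exact main u v huv h1 h2
        · exact (main v u huv.symm h2 h1).symm
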